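/- For weakly compact convex sets P, P_n of probability measures on a Polish space, JS(P_n,P) → 0 as n → ∞ if and only if V(P_n,P) → 0. -/

import Mathlib

open MeasureTheory Real ENNReal Filter Topology
open scoped Classical

noncomputable def klDiv {X : Type*} [MeasurableSpace X] (μ ν : Measure X) : EReal :=
  if μ ≪ ν ∧ Integrable (fun x => Real.log (μ.rnDeriv ν x).toReal) μ
  then ((∫ x, Real.log (μ.rnDeriv ν x).toReal ∂μ : ℝ) : EReal)
  else ⊤

noncomputable def tvDist {X : Type*} [MeasurableSpace X] (μ ν : Measure X) : ℝ :=
  ⨆ A : {A : Set X // MeasurableSet A}, |(μ A).toReal - (ν A).toReal|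


noncomputable def genKL {X : Type*} [MeasurableSpace X]
    (P Q : Set (ProbabilityMeasure X)) : EReal :=
  ⨆ μ ∈ P, ⨅ ν ∈ Q, klDiv μ.toMeasure ν.toMeasure

noncomputable def genV {X : Type*} [MeasurableSpace X]
    (P Q : Set (ProbabilityMeasure X)) : ℝ :=
  max (⨆ μ : P, ⨅ ν : Q, tvDist μ.1.toMeasure ν.1.toMeasure)
      (⨆ ν : Q, ⨅ μ : P, tvDist μ.1.toMeasure ν.1.toMeasure)

def ConvexPM {X : Type*} [MeasurableSpace X] (P : Set (ProbabilityMeasure X)) : Prop :=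
  ∀ μ ∈ P, ∀ ν ∈ P, ∀ a b : ℝ≥0∞, a + b = 1 →
    ∃ κ ∈ P, κ.toMeasure = a • μ.toMeasure + b • ν.toMeasure

def midSet {X : Type*} [MeasurableSpace X]
    (P Q : Set (ProbabilityMeasure X)) : Set (ProbabilityMeasure X) :=
  {κ | ∃ μ ∈ P, ∃ ν ∈ Q, κ.toMeasure = (2:ℝ≥0∞)⁻¹ • μ.toMeasure + (2:ℝ≥0∞)⁻¹ • ν.toMeasure}

noncomputable def genJS {X : Type*} [MeasurableSpace X]
    (P Q : Set (ProbabilityMeasure X)) : EReal :=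
  ((1/2 : ℝ) : EReal) * genKL P (midSet P Q) + ((1/2 : ℝ) : EReal) * genKL Q (midSet P Q)



open Set

set_option linter.unusedSectionVars false
set_option linter.unusedVariables false
set_option maxHeartbeats 1000000

section TV
variable {X : Type*} [MeasurableSpace X] {μ ν ξ : Measure X}

lemma prob_toReal_le_one [IsProbabilityMeasure μ] (A : Set X) : (μ A).toReal ≤ 1 := by
  have h := prob_le_one (μ := μ) (s := A)
  have := (ENNReal.toReal_le_toReal (measure_ne_top μ A) ENNReal.one_ne_top).2 h
  simpa using this

lemma tv_term_le_one [IsProbabilityMeasure μ] [IsProbabilityMeasure ν] (A : Set X) :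
    |(μ A).toReal - (ν A).toReal| ≤ 1 := by
  have h1 := prob_toReal_le_one (μ := μ) A
  have h2 := prob_toReal_le_one (μ := ν) A
  have h3 : 0 ≤ (μ A).toReal := ENNReal.toReal_nonneg
  have h4 : 0 ≤ (ν A).toReal := ENNReal.toReal_nonneg
  rw [abs_sub_le_iff]; constructor <;> linarith

lemma tv_bddAbove [IsProbabilityMeasure μ] [IsProbabilityMeasure ν] :
    BddAbove (Set.range fun A : {A : Set X // MeasurableSet A} =>
      |(μ A).toReal - (ν A).toReal|) := by
  refine ⟨1, ?_⟩
  rintro x ⟨A, rfl⟩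
  exact tv_term_le_one A.1

lemma tv_le_of_forall [IsProbabilityMeasure μ] [IsProbabilityMeasure ν] {c : ℝ}
    (h : ∀ A : Set X, MeasurableSet A → |(μ A).toReal - (ν A).toReal| ≤ c) :
    tvDist μ ν ≤ c := by
  refine ciSup_le fun A => h A.1 A.2

lemma le_tv [IsProbabilityMeasure μ] [IsProbabilityMeasure ν] {A : Set X}
    (hA : MeasurableSet A) : |(μ A).toReal - (ν A).toReal| ≤ tvDist μ ν :=
  le_ciSup (tv_bddAbove) (⟨A, hA⟩ : {A : Set X // MeasurableSet A})

lemma tv_nonneg [IsProbabilityMeasure μ] [IsProbabilityMeasure ν] : 0 ≤ tvDist μ ν := by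
  have := le_tv (μ := μ) (ν := ν) MeasurableSet.empty
  simp at this
  exact le_trans (abs_nonneg _) (le_tv MeasurableSet.empty)

lemma tv_le_one [IsProbabilityMeasure μ] [IsProbabilityMeasure ν] : tvDist μ ν ≤ 1 :=
  tv_le_of_forall fun A _ => tv_term_le_one A

lemma tv_triangle [IsProbabilityMeasure μ] [IsProbabilityMeasure ν] [IsProbabilityMeasure ξ] :
    tvDist μ ν ≤ tvDist μ ξ + tvDist ξ ν := by
  refine tv_le_of_forall fun A hA => ?_
  calc |(μ A).toReal - (ν A).toReal|
      ≤ |(μ A).toReal - (ξ A).toReal| + |(ξ A).toReal - (ν A).toReal| := abs_sub_le _ _ _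
    _ ≤ tvDist μ ξ + tvDist ξ ν := add_le_add (le_tv hA) (le_tv hA)

lemma tv_comm : tvDist μ ν = tvDist ν μ := by
  unfold tvDist
  congr 1; funext A; rw [abs_sub_comm]

lemma half_add_apply [IsProbabilityMeasure μ] [IsProbabilityMeasure ν] (A : Set X) :
    (((2:ℝ≥0∞)⁻¹ • μ + (2:ℝ≥0∞)⁻¹ • ν) A).toReal
      = (1/2) * (μ A).toReal + (1/2) * (ν A).toReal := by
  rw [Measure.add_apply, Measure.smul_apply, Measure.smul_apply, smul_eq_mul, smul_eq_mul,
    ENNReal.toReal_add, ENNReal.toReal_mul, ENNReal.toReal_mul]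
  · norm_num
  · exact ENNReal.mul_ne_top (by simp) (measure_ne_top _ _)
  · exact ENNReal.mul_ne_top (by simp) (measure_ne_top _ _)

/-- contraction: tv(½a+½c, ½b+½c) ≤ ½ tv(a,b), stated via measures equal to such sums -/
lemma tv_mid [IsProbabilityMeasure μ] [IsProbabilityMeasure ν] {a b c : Measure X}
    [IsProbabilityMeasure a] [IsProbabilityMeasure b] [IsProbabilityMeasure c]
    (hμ : μ = (2:ℝ≥0∞)⁻¹ • a + (2:ℝ≥0∞)⁻¹ • c) (hν : ν = (2:ℝ≥0∞)⁻¹ • b + (2:ℝ≥0∞)⁻¹ • c) :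
    tvDist μ ν ≤ (1/2) * tvDist a b := by
  refine tv_le_of_forall fun A hA => ?_
  rw [hμ, hν, half_add_apply, half_add_apply]
  have : (1/2) * (a A).toReal + (1/2) * (c A).toReal - ((1/2) * (b A).toReal + (1/2) * (c A).toReal)
      = (1/2) * ((a A).toReal - (b A).toReal) := by ring
  rw [this, abs_mul, abs_of_nonneg (by norm_num : (0:ℝ) ≤ 1/2)]
  have := le_tv (μ := a) (ν := b) hA
  nlinarith [this]

end TV

/-- derivative helper -/
lemma F_hasDeriv (p : ℝ) {x : ℝ} (hx : x ∈ Ioo (0:ℝ) 1) :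
    HasDerivAt (fun q => p * Real.log p + (1-p) * Real.log (1-p)
      - p * Real.log q - (1-p) * Real.log (1-q) - 2*(p-q)^2)
      (-(p / x) + (1-p)/(1-x) + 4*(p-x)) x := by
  obtain ⟨hx0, hx1⟩ := hx
  have h1 : HasDerivAt (fun q : ℝ => p * Real.log q) (p / x) x := by
    simpa [mul_comm, div_eq_mul_inv] using (Real.hasDerivAt_log hx0.ne').const_mul p
  have h2 : HasDerivAt (fun q : ℝ => Real.log (1-q)) (-(1-x)⁻¹) x := by
    have : HasDerivAt (fun q : ℝ => 1 - q) (-1) x := by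
      simpa using (hasDerivAt_id x).const_sub 1
    exact ((Real.hasDerivAt_log (by linarith : (1:ℝ)-x ≠ 0)).comp x this).congr_deriv (by ring)
  have h2' : HasDerivAt (fun q : ℝ => (1-p) * Real.log (1-q)) ((1-p) * -(1-x)⁻¹) x :=
    h2.const_mul _
  have h3 : HasDerivAt (fun q : ℝ => 2*(p-q)^2) (2*(2*(p-x)*(-1))) x := by
    have hb : HasDerivAt (fun q : ℝ => p - q) (-1) x := by
      simpa using (hasDerivAt_id x).const_sub p
    have := (hb.pow 2).const_mul 2
    exact this.congr_deriv (by ring)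
  have := (((hasDerivAt_const x (p * Real.log p + (1-p) * Real.log (1-p))).sub h1).sub h2').sub h3
  exact this.congr_deriv (by ring)

lemma contOn_plog {p a b : ℝ} (hp : 0 ≤ p) (ha : 0 ≤ a) (h : p = 0 ∨ 0 < a) :
    ContinuousOn (fun x => p * Real.log x) (Icc a b) := by
  rcases h with h | h
  · subst h
    exact continuousOn_const.congr (fun x _ => by rw [zero_mul])
  · exact continuousOn_const.mul (Real.continuousOn_log.mono (fun x hx => by
      simp only [Set.mem_compl_iff, Set.mem_singleton_iff]
      exact ne_of_gt (lt_of_lt_of_le h hx.1)))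

lemma contOn_qlog {p a b : ℝ} (h : p = 1 ∨ b < 1) :
    ContinuousOn (fun x => (1-p) * Real.log (1-x)) (Icc a b) := by
  rcases h with h | h
  · subst h
    exact (continuousOn_const (c := (0:ℝ))).congr (fun x _ => by norm_num)
  · refine continuousOn_const.mul ?_
    refine Real.continuousOn_log.comp ((continuous_const.sub continuous_id).continuousOn) ?_
    intro x hx
    simp only [Set.mem_compl_iff, Set.mem_singleton_iff, id]
    have := hx.2
    intro hcon
    have : (1:ℝ) - x > 0 := by linarith
    linarith

lemma binaryPinsker {p q : ℝ} (hp : p ∈ Icc (0:ℝ) 1) (hq : q ∈ Ioo (0:ℝ) 1) :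
    2*(p-q)^2 ≤ p * Real.log p + (1-p) * Real.log (1-p)
      - p * Real.log q - (1-p) * Real.log (1-q) := by
  set F : ℝ → ℝ := fun q' => p * Real.log p + (1-p) * Real.log (1-p)
      - p * Real.log q' - (1-p) * Real.log (1-q') - 2*(p-q')^2 with hF
  have hFp : F p = 0 := by simp [hF]
  have hderiv : ∀ x ∈ Ioo (0:ℝ) 1, HasDerivAt F (-(p / x) + (1-p)/(1-x) + 4*(p-x)) x :=
    fun x hx => F_hasDeriv p hx
  have key : 0 ≤ F q := by
    rcases le_or_gt p q with hpq | hpq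
    · rcases eq_or_lt_of_le hpq with rfl | hpq'
      · simp [hFp]
      · -- monotone on [p,q]
        have hsub : Ioo p q ⊆ Ioo (0:ℝ) 1 := fun x hx =>
          ⟨lt_of_le_of_lt hp.1 hx.1, lt_trans hx.2 hq.2⟩
        have hcont : ContinuousOn F (Icc p q) := by
          refine (((continuousOn_const.sub (contOn_plog hp.1 hp.1 ?_)).sub
            (contOn_qlog (Or.inr hq.2))).sub (by fun_prop))
          rcases eq_or_lt_of_le hp.1 with h | h
          · exact Or.inl h.symm
          · exact Or.inr h
        have hmono : MonotoneOn F (Icc p q) := by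
          refine monotoneOn_of_deriv_nonneg (convex_Icc p q) hcont ?_ ?_
          · intro x hx
            rw [interior_Icc] at hx
            exact ((hderiv x (hsub hx)).differentiableAt).differentiableWithinAt
          · intro x hx
            rw [interior_Icc] at hx
            have hx' := hsub hx
            rw [(hderiv x hx').deriv]
            have hx0 : x ≠ 0 := ne_of_gt hx'.1
            have hx1 : (1:ℝ) - x ≠ 0 := by have := hx'.2; intro h; linarith
            have h1 : -(p / x) + (1-p)/(1-x) + 4*(p-x)
                = (x-p)*(1-2*x)^2 / (x*(1-x)) := by
              field_simp
              ring
            rw [h1]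
            have hden : 0 < x*(1-x) := mul_pos hx'.1 (by linarith [hx'.2])
            exact div_nonneg (mul_nonneg (by linarith [hx.1]) (sq_nonneg _)) hden.le
        have := hmono ⟨le_refl p, hpq⟩ ⟨hpq, le_refl q⟩ hpq
        rw [hFp] at this
        exact this
    · -- antitone on [q,p]
      have hsub : Ioo q p ⊆ Ioo (0:ℝ) 1 := fun x hx =>
        ⟨lt_trans hq.1 hx.1, lt_of_lt_of_le hx.2 hp.2⟩
      have hcont : ContinuousOn F (Icc q p) := by
        refine (((continuousOn_const.sub (contOn_plog hp.1 hq.1.le (Or.inr hq.1))).sub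
          (contOn_qlog ?_)).sub (by fun_prop))
        rcases eq_or_lt_of_le hp.2 with h | h
        · exact Or.inl h
        · exact Or.inr h
      have hmono : AntitoneOn F (Icc q p) := by
        refine antitoneOn_of_deriv_nonpos (convex_Icc q p) hcont ?_ ?_
        · intro x hx
          rw [interior_Icc] at hx
          exact ((hderiv x (hsub hx)).differentiableAt).differentiableWithinAt
        · intro x hx
          rw [interior_Icc] at hx
          have hx' := hsub hx
          rw [(hderiv x hx').deriv]
          have hx0 : x ≠ 0 := ne_of_gt hx'.1
          have hx1 : (1:ℝ) - x ≠ 0 := by have := hx'.2; intro h; linarith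
          have h1 : -(p / x) + (1-p)/(1-x) + 4*(p-x)
              = (x-p)*(1-2*x)^2 / (x*(1-x)) := by
            field_simp
            ring
          rw [h1]
          have hden : 0 < x*(1-x) := mul_pos hx'.1 (by linarith [hx'.2])
          exact div_nonpos_of_nonpos_of_nonneg
            (mul_nonpos_of_nonpos_of_nonneg (by linarith [hx.2]) (sq_nonneg _)) hden.le
      have := hmono ⟨le_refl q, hpq.le⟩ ⟨hpq.le, le_refl p⟩ hpq.le
      rw [hFp] at this
      exact this
  simp only [hF] at key
  linarith

section KL
variable {X : Type*} [MeasurableSpace X] {μ κ : Measure X}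
  [IsProbabilityMeasure μ] [IsProbabilityMeasure κ]

lemma integrable_f (hμκ : μ ≪ κ) : Integrable (fun x => (μ.rnDeriv κ x).toReal) κ :=
  Measure.integrable_toReal_rnDeriv

lemma integral_f (hμκ : μ ≪ κ) : ∫ x, (μ.rnDeriv κ x).toReal ∂κ = 1 := by
  rw [Measure.integral_toReal_rnDeriv hμκ]
  simp

lemma kl_change_of_var (hμκ : μ ≪ κ)
    (hint : Integrable (fun x => Real.log (μ.rnDeriv κ x).toReal) μ) :
    ∫ x, Real.log (μ.rnDeriv κ x).toReal ∂μ
      = ∫ x, (μ.rnDeriv κ x).toReal * Real.log (μ.rnDeriv κ x).toReal ∂κ := by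
  rw [← integral_rnDeriv_smul hμκ]
  simp [smul_eq_mul]

lemma integrable_flogf (hμκ : μ ≪ κ)
    (hint : Integrable (fun x => Real.log (μ.rnDeriv κ x).toReal) μ) :
    Integrable (fun x => (μ.rnDeriv κ x).toReal * Real.log (μ.rnDeriv κ x).toReal) κ := by
  have := (integrable_rnDeriv_smul_iff hμκ).2 hint
  simpa [smul_eq_mul] using this

lemma jensen_global (hμκ : μ ≪ κ)
    (hint : Integrable (fun x => Real.log (μ.rnDeriv κ x).toReal) μ) :
    0 ≤ ∫ x, Real.log (μ.rnDeriv κ x).toReal ∂μ := by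
  rw [kl_change_of_var hμκ hint]
  have h := Real.convexOn_mul_log.map_integral_le (μ := κ)
    (f := fun x => (μ.rnDeriv κ x).toReal)
    Real.continuous_mul_log.continuousOn isClosed_Ici
    (Eventually.of_forall fun x => ENNReal.toReal_nonneg)
    (integrable_f hμκ) ?_
  · rw [integral_f hμκ] at h
    simpa using h
  · exact integrable_flogf hμκ hint

lemma jensen_set (hμκ : μ ≪ κ)
    (hint : Integrable (fun x => Real.log (μ.rnDeriv κ x).toReal) μ)
    {A : Set X} (hA : MeasurableSet A) (h0 : κ A ≠ 0) :
    (μ A).toReal * Real.log (μ A).toReal - (μ A).toReal * Real.log (κ A).toReal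
      ≤ ∫ x in A, (μ.rnDeriv κ x).toReal * Real.log (μ.rnDeriv κ x).toReal ∂κ := by
  set p := (μ A).toReal with hp
  set q := (κ A).toReal with hqdef
  have hq : 0 < q := ENNReal.toReal_pos h0 (measure_ne_top _ _)
  have havg : ⨍ x in A, (μ.rnDeriv κ x).toReal ∂κ = p / q := by
    rw [setAverage_eq, Measure.setIntegral_toReal_rnDeriv hμκ A]
    rw [div_eq_inv_mul]
    rfl
  have h := Real.convexOn_mul_log.map_set_average_le
    (f := fun x => (μ.rnDeriv κ x).toReal)
    Real.continuous_mul_log.continuousOn isClosed_Ici h0 (measure_ne_top _ _)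
    (Eventually.of_forall fun x => ENNReal.toReal_nonneg)
    ((integrable_f hμκ).integrableOn)
    ((integrable_flogf hμκ hint).integrableOn)
  rw [havg] at h
  have havg2 : (⨍ x in A, (μ.rnDeriv κ x).toReal * Real.log (μ.rnDeriv κ x).toReal ∂κ)
      = q⁻¹ * ∫ x in A, (μ.rnDeriv κ x).toReal * Real.log (μ.rnDeriv κ x).toReal ∂κ := by
    rw [setAverage_eq]
    rfl
  rw [havg2] at h
  -- h : (p/q) * log (p/q) ≤ q⁻¹ * ∫ ...
  have hp0 : 0 ≤ p := ENNReal.toReal_nonneg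
  have h' : q * (p / q * Real.log (p / q))
      ≤ ∫ x in A, (μ.rnDeriv κ x).toReal * Real.log (μ.rnDeriv κ x).toReal ∂κ := by
    calc q * (p / q * Real.log (p / q))
        ≤ q * (q⁻¹ * ∫ x in A, (μ.rnDeriv κ x).toReal * Real.log (μ.rnDeriv κ x).toReal ∂κ) :=
          mul_le_mul_of_nonneg_left h hq.le
      _ = _ := by field_simp
  refine le_trans (le_of_eq ?_) h'
  rcases eq_or_lt_of_le hp0 with hp0' | hp0'
  · rw [← hp0']; simp
  · rw [Real.log_div hp0'.ne' hq.ne']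
    field_simp

lemma compl_toReal {A : Set X} (hA : MeasurableSet A) :
    (μ Aᶜ).toReal = 1 - (μ A).toReal := by
  have h := measure_add_measure_compl (μ := μ) hA
  rw [measure_univ] at h
  have := congrArg ENNReal.toReal h
  rw [ENNReal.toReal_add (measure_ne_top _ _) (measure_ne_top _ _)] at this
  simp at this
  linarith

lemma pinsker_per_set (hμκ : μ ≪ κ)
    (hint : Integrable (fun x => Real.log (μ.rnDeriv κ x).toReal) μ)
    {A : Set X} (hA : MeasurableSet A) :
    2 * ((μ A).toReal - (κ A).toReal)^2 ≤ ∫ x, Real.log (μ.rnDeriv κ x).toReal ∂μ := by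
  set p := (μ A).toReal with hp
  set q := (κ A).toReal with hq
  rcases eq_or_ne (κ A) 0 with h0 | h0
  · have hμA : μ A = 0 := hμκ h0
    have : p = q := by rw [hp, hq, h0, hμA]
    rw [this]
    simpa using jensen_global hμκ hint
  rcases eq_or_ne (κ Aᶜ) 0 with h1 | h1
  · have hμA : μ Aᶜ = 0 := hμκ h1
    have hq1 : q = 1 := by
      rw [hq]
      have := compl_toReal (μ := κ) hA
      rw [h1] at this; simp at this; linarith
    have hp1 : p = 1 := by
      rw [hp]
      have := compl_toReal (μ := μ) hA
      rw [hμA] at this; simp at this; linarith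
    rw [hp1, hq1]
    simpa using jensen_global hμκ hint
  · -- main case : 0 < q < 1
    have hq0 : 0 < q := ENNReal.toReal_pos h0 (measure_ne_top _ _)
    have hq1 : q < 1 := by
      have h := ENNReal.toReal_pos h1 (measure_ne_top _ _)
      have h2 := compl_toReal (μ := κ) hA
      rw [← hq] at h2
      linarith
    have hp01 : p ∈ Icc (0:ℝ) 1 := ⟨ENNReal.toReal_nonneg, by
      have h := prob_le_one (μ := μ) (s := A)
      have := (ENNReal.toReal_le_toReal (measure_ne_top μ A) ENNReal.one_ne_top).2 h
      simpa using this⟩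
    have hbin := binaryPinsker hp01 ⟨hq0, hq1⟩
    rw [kl_change_of_var hμκ hint,
      ← integral_add_compl hA (integrable_flogf hμκ hint)]
    have hA1 := jensen_set hμκ hint hA h0
    have hA2 := jensen_set hμκ hint hA.compl h1
    rw [compl_toReal (μ := μ) hA, compl_toReal (μ := κ) hA, ← hp, ← hq] at hA2
    calc 2 * (p - q)^2
        ≤ p * Real.log p + (1-p) * Real.log (1-p)
          - p * Real.log q - (1-p) * Real.log (1-q) := hbin
      _ ≤ _ := by
          have := add_le_add hA1 hA2
          rw [← hp, ← hq] at this
          linarith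
end KL


section Pinsker
variable {X : Type*} [MeasurableSpace X] {μ κ : Measure X}
  [IsProbabilityMeasure μ] [IsProbabilityMeasure κ]

lemma pinsker_tv (hμκ : μ ≪ κ)
    (hint : Integrable (fun x => Real.log (μ.rnDeriv κ x).toReal) μ) :
    tvDist μ κ ≤ Real.sqrt ((∫ x, Real.log (μ.rnDeriv κ x).toReal ∂μ) / 2) := by
  refine tv_le_of_forall fun A hA => ?_
  refine Real.abs_le_sqrt ?_
  have := pinsker_per_set hμκ hint hA
  nlinarith [this]

lemma klDiv_nonneg : (0 : EReal) ≤ klDiv μ κ := by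
  unfold klDiv
  split_ifs with h
  · exact_mod_cast jensen_global h.1 h.2
  · exact le_top

lemma tv_le_of_klDiv_le {c : ℝ} (hc : 0 ≤ c) (h : klDiv μ κ ≤ (c : EReal)) :
    tvDist μ κ ≤ Real.sqrt (c / 2) := by
  unfold klDiv at h
  split_ifs at h with hcond
  · have h' : (∫ x, Real.log (μ.rnDeriv κ x).toReal ∂μ) ≤ c := by exact_mod_cast h
    refine le_trans (pinsker_tv hcond.1 hcond.2) ?_
    exact Real.sqrt_le_sqrt (by linarith)
  · exact absurd h (by simp)

end Pinsker

section Mid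
variable {X : Type*} [MeasurableSpace X] {μ ν : Measure X}
  [IsProbabilityMeasure μ] [IsProbabilityMeasure ν]

lemma half_self (m : Measure X) : (2:ℝ≥0∞)⁻¹ • m + (2:ℝ≥0∞)⁻¹ • m = m := by
  rw [← add_smul, ENNReal.inv_two_add_inv_two, one_smul]

instance isProbabilityMeasure_mid : IsProbabilityMeasure ((2:ℝ≥0∞)⁻¹ • μ + (2:ℝ≥0∞)⁻¹ • ν) := by
  constructor
  rw [Measure.add_apply, Measure.smul_apply, Measure.smul_apply, measure_univ, measure_univ]
  simp [smul_eq_mul]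
  rw [ENNReal.inv_two_add_inv_two]

/-- the key upper bound : KL(μ ‖ (μ+ν)/2) ≤ tv(μ,ν) -/
lemma klDiv_mid_le_tv {κ : Measure X} [IsProbabilityMeasure κ]
    (hκ : κ = (2:ℝ≥0∞)⁻¹ • μ + (2:ℝ≥0∞)⁻¹ • ν) :
    klDiv μ κ ≤ ((tvDist μ ν : ℝ) : EReal) := by
  -- absolute continuity
  have hμκ : μ ≪ κ := by
    refine Measure.AbsolutelyContinuous.mk fun A hA h0 => ?_
    rw [hκ] at h0
    simp only [Measure.add_apply, Measure.smul_apply, smul_eq_mul, add_eq_zero,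
      mul_eq_zero] at h0
    rcases h0.1 with h | h
    · norm_num at h
    · exact h
  -- density bounded by 2
  have hle2 : μ.rnDeriv κ ≤ᵐ[κ] fun _ => (2:ℝ≥0∞) := by
    have h2κ : (2:ℝ≥0∞) • κ = μ + ν := by
      rw [hκ, smul_add, smul_smul, smul_smul,
        ENNReal.mul_inv_cancel (by norm_num) (by norm_num), one_smul, one_smul]
    have hμ2κ : μ ≤ (2:ℝ≥0∞) • κ := by
      rw [h2κ]
      intro s
      simp only [Measure.add_apply]
      exact le_self_add
    have hκ2κ : κ ≪ (2:ℝ≥0∞) • κ := by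
      refine Measure.AbsolutelyContinuous.mk fun A hA h0 => ?_
      simpa using h0
    haveI : IsFiniteMeasure ((2:ℝ≥0∞) • κ) := by rw [h2κ]; infer_instance
    have h1 := Measure.rnDeriv_le_one_of_le hμ2κ
    have h2 := Measure.rnDeriv_smul_right_of_ne_top μ κ (r := (2:ℝ≥0∞))
      (by norm_num) (by norm_num)
    filter_upwards [hκ2κ.ae_le h1, h2] with x hx1 hx2
    rw [hx2] at hx1
    simp only [Pi.smul_apply, smul_eq_mul, Pi.one_apply] at hx1
    calc μ.rnDeriv κ x = 2 * (2⁻¹ * μ.rnDeriv κ x) := by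
          rw [← mul_assoc, ENNReal.mul_inv_cancel (by norm_num) (by norm_num), one_mul]
      _ ≤ 2 * 1 := by gcongr
      _ = 2 := mul_one 2
  -- measurability and a.e. facts
  have hmeas : Measurable fun x => (μ.rnDeriv κ x).toReal :=
    (Measure.measurable_rnDeriv μ κ).ennreal_toReal
  have hflt : ∀ᵐ x ∂κ, μ.rnDeriv κ x < ⊤ := Measure.rnDeriv_lt_top μ κ
  have hfle2 : ∀ᵐ x ∂κ, (μ.rnDeriv κ x).toReal ≤ 2 := by
    filter_upwards [hle2] with x hx
    have := ENNReal.toReal_mono (by norm_num) hx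
    simpa using this
  -- integrability of the inverse density
  have hinv_int : Integrable (fun x => ((μ.rnDeriv κ x)⁻¹).toReal) μ := by
    refine integrable_toReal_of_lintegral_ne_top
      ((Measure.measurable_rnDeriv μ κ).inv).aemeasurable ?_
    have heq : ∫⁻ x, (μ.rnDeriv κ x)⁻¹ ∂μ
        = ∫⁻ x, μ.rnDeriv κ x * (μ.rnDeriv κ x)⁻¹ ∂κ :=
      (lintegral_rnDeriv_mul hμκ
        ((Measure.measurable_rnDeriv μ κ).inv).aemeasurable).symm
    rw [heq]
    have hb : ∫⁻ x, μ.rnDeriv κ x * (μ.rnDeriv κ x)⁻¹ ∂κ ≤ ∫⁻ _, 1 ∂κ :=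
      lintegral_mono fun x => ENNReal.mul_inv_le_one _
    rw [lintegral_one, measure_univ] at hb
    exact ne_top_of_le_ne_top ENNReal.one_ne_top hb
  have hpos : ∀ᵐ x ∂μ, 0 < μ.rnDeriv κ x := Measure.rnDeriv_pos hμκ
  have hltμ : ∀ᵐ x ∂μ, μ.rnDeriv κ x < ⊤ := hμκ.ae_le hflt
  have hle2μ : ∀ᵐ x ∂μ, (μ.rnDeriv κ x).toReal ≤ 2 := hμκ.ae_le hfle2
  -- integrability of the log-likelihood ratio
  have hint : Integrable (fun x => Real.log (μ.rnDeriv κ x).toReal) μ := by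
    refine Integrable.mono' ((integrable_const (Real.log 2)).add hinv_int)
      (hmeas.log.aestronglyMeasurable) ?_
    filter_upwards [hpos, hltμ, hle2μ] with x h1 h2 h3
    have ht0 : 0 < (μ.rnDeriv κ x).toReal := ENNReal.toReal_pos h1.ne' h2.ne
    simp only [Pi.add_apply]
    rw [ENNReal.toReal_inv]
    set t := (μ.rnDeriv κ x).toReal with htdef
    have htinv : 0 ≤ t⁻¹ := inv_nonneg.2 ht0.le
    rcases le_or_gt 1 t with h4 | h4
    · rw [Real.norm_eq_abs, abs_of_nonneg (Real.log_nonneg h4)]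
      have := Real.log_le_log ht0 h3
      linarith
    · rw [Real.norm_eq_abs, abs_of_neg (Real.log_neg ht0 h4)]
      have h5 : Real.log t⁻¹ ≤ t⁻¹ - 1 :=
        Real.log_le_sub_one_of_pos (inv_pos.2 ht0)
      rw [Real.log_inv] at h5
      have h6 : (0:ℝ) ≤ Real.log 2 := Real.log_nonneg (by norm_num)
      linarith
  -- value bound
  have hFint : Integrable (fun x => (μ.rnDeriv κ x).toReal) κ := integrable_f hμκ
  have hint2 : Integrable
      (fun x => (μ.rnDeriv κ x).toReal * Real.log (μ.rnDeriv κ x).toReal) κ :=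
    integrable_flogf hμκ hint
  have hq1 : Integrable (fun x => (μ.rnDeriv κ x).toReal * ((μ.rnDeriv κ x).toReal - 1)) κ := by
    refine Integrable.mono' (integrable_const (6:ℝ)) (hmeas.mul (hmeas.sub measurable_const)).aestronglyMeasurable ?_
    filter_upwards [hfle2] with x hx
    have h0 : 0 ≤ (μ.rnDeriv κ x).toReal := ENNReal.toReal_nonneg
    rw [Real.norm_eq_abs, abs_mul]
    have h1 : |(μ.rnDeriv κ x).toReal| ≤ 2 := by rw [abs_of_nonneg h0]; exact hx
    have h2 : |(μ.rnDeriv κ x).toReal - 1| ≤ 3 := by rw [abs_le]; constructor <;> linarith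
    nlinarith [abs_nonneg ((μ.rnDeriv κ x).toReal), abs_nonneg ((μ.rnDeriv κ x).toReal - 1)]
  have hsq_int : Integrable (fun x => ((μ.rnDeriv κ x).toReal - 1)^2) κ := by
    refine Integrable.mono' (integrable_const (9:ℝ)) ((hmeas.sub measurable_const).pow measurable_const).aestronglyMeasurable ?_
    filter_upwards [hfle2] with x hx
    have h0 : 0 ≤ (μ.rnDeriv κ x).toReal := ENNReal.toReal_nonneg
    rw [Real.norm_eq_abs, abs_of_nonneg (sq_nonneg _)]
    nlinarith
  have hFsub : Integrable (fun x => (μ.rnDeriv κ x).toReal - 1) κ :=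
    hFint.sub (integrable_const 1)
  have habs_int : Integrable (fun x => |(μ.rnDeriv κ x).toReal - 1|) κ := hFsub.abs
  have step1 : ∫ x, (μ.rnDeriv κ x).toReal * Real.log (μ.rnDeriv κ x).toReal ∂κ
      ≤ ∫ x, (μ.rnDeriv κ x).toReal * ((μ.rnDeriv κ x).toReal - 1) ∂κ := by
    refine integral_mono_ae hint2 hq1 (Eventually.of_forall fun x => ?_)
    have h0 : 0 ≤ (μ.rnDeriv κ x).toReal := ENNReal.toReal_nonneg
    show (μ.rnDeriv κ x).toReal * Real.log (μ.rnDeriv κ x).toReal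
        ≤ (μ.rnDeriv κ x).toReal * ((μ.rnDeriv κ x).toReal - 1)
    rcases eq_or_lt_of_le h0 with h | h
    · rw [← h]; simp
    · exact mul_le_mul_of_nonneg_left (Real.log_le_sub_one_of_pos h) h0
  have step2 : ∫ x, (μ.rnDeriv κ x).toReal * ((μ.rnDeriv κ x).toReal - 1) ∂κ
      = ∫ x, ((μ.rnDeriv κ x).toReal - 1)^2 ∂κ
        + ∫ x, ((μ.rnDeriv κ x).toReal - 1) ∂κ := by
    rw [← integral_add hsq_int hFsub]
    congr 1
    funext x
    ring
  have step3 : ∫ x, ((μ.rnDeriv κ x).toReal - 1) ∂κ = 0 := by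
    rw [integral_sub hFint (integrable_const 1), integral_f hμκ, integral_const]
    simp
  have step4 : ∫ x, ((μ.rnDeriv κ x).toReal - 1)^2 ∂κ
      ≤ ∫ x, |(μ.rnDeriv κ x).toReal - 1| ∂κ := by
    refine integral_mono_ae hsq_int habs_int ?_
    filter_upwards [hfle2] with x hx
    have h0 : 0 ≤ (μ.rnDeriv κ x).toReal := ENNReal.toReal_nonneg
    have h1 : |(μ.rnDeriv κ x).toReal - 1| ≤ 1 := by rw [abs_le]; constructor <;> linarith
    calc ((μ.rnDeriv κ x).toReal - 1)^2 = |(μ.rnDeriv κ x).toReal - 1|^2 := (sq_abs _).symm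
      _ ≤ |(μ.rnDeriv κ x).toReal - 1| * 1 := by
          rw [sq]
          exact mul_le_mul_of_nonneg_left h1 (abs_nonneg _)
      _ = _ := mul_one _
  have step5 : ∫ x, |(μ.rnDeriv κ x).toReal - 1| ∂κ ≤ 2 * tvDist μ κ := by
    set A := {x | 1 ≤ (μ.rnDeriv κ x).toReal} with hAdef
    have hA : MeasurableSet A := measurableSet_le measurable_const hmeas
    rw [← integral_add_compl hA habs_int]
    have e1 : ∫ x in A, |(μ.rnDeriv κ x).toReal - 1| ∂κ
        = (μ A).toReal - (κ A).toReal := by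
      rw [setIntegral_congr_fun hA (g := fun x => (μ.rnDeriv κ x).toReal - 1)
        (fun x hx => abs_of_nonneg (by simp only [hAdef, Set.mem_setOf_eq] at hx; linarith))]
      rw [integral_sub hFint.integrableOn (integrableOn_const (measure_lt_top κ A).ne),
        Measure.setIntegral_toReal_rnDeriv hμκ A]
      simp [Measure.restrict_apply_univ]
      rfl
    have e2 : ∫ x in Aᶜ, |(μ.rnDeriv κ x).toReal - 1| ∂κ
        = (κ Aᶜ).toReal - (μ Aᶜ).toReal := by
      rw [setIntegral_congr_fun hA.compl (g := fun x => 1 - (μ.rnDeriv κ x).toReal)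
        (fun x hx => by
          simp only [hAdef, Set.mem_compl_iff, Set.mem_setOf_eq, not_le] at hx
          rw [abs_of_nonpos (by linarith)]; ring)]
      rw [integral_sub (integrableOn_const (C := (1:ℝ)) (measure_lt_top κ Aᶜ).ne) hFint.integrableOn,
        Measure.setIntegral_toReal_rnDeriv hμκ Aᶜ]
      simp [Measure.restrict_apply_univ]
      rfl
    rw [e1, e2]
    have t1 : (μ A).toReal - (κ A).toReal ≤ tvDist μ κ :=
      le_trans (le_abs_self _) (le_tv hA)
    have t2 : (κ Aᶜ).toReal - (μ Aᶜ).toReal ≤ tvDist μ κ := by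
      refine le_trans ?_ (le_tv hA.compl)
      rw [abs_sub_comm]
      exact le_abs_self _
    linarith
  have step6 : tvDist μ κ ≤ (1/2) * tvDist μ ν := by
    refine tv_mid (half_self μ).symm ?_
    rw [hκ, add_comm]
  -- conclude
  have hval : ∫ x, Real.log (μ.rnDeriv κ x).toReal ∂μ ≤ tvDist μ ν := by
    rw [kl_change_of_var hμκ hint]
    calc ∫ x, (μ.rnDeriv κ x).toReal * Real.log (μ.rnDeriv κ x).toReal ∂κ
        ≤ ∫ x, (μ.rnDeriv κ x).toReal * ((μ.rnDeriv κ x).toReal - 1) ∂κ := step1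
      _ = ∫ x, ((μ.rnDeriv κ x).toReal - 1)^2 ∂κ := by rw [step2, step3, add_zero]
      _ ≤ ∫ x, |(μ.rnDeriv κ x).toReal - 1| ∂κ := step4
      _ ≤ 2 * tvDist μ κ := step5
      _ ≤ tvDist μ ν := by linarith
  unfold klDiv
  rw [if_pos ⟨hμκ, hint⟩]
  exact_mod_cast hval


end Mid

section Iter
variable {X : Type*} [MeasurableSpace X]

lemma iter_tv (A T : Set (ProbabilityMeasure X)) (hT : ConvexPM T) (hTne : T.Nonempty)
    {ε : ℝ} (hε : 0 ≤ ε)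
    (H : ∀ a ∈ A, ∃ a' ∈ A, ∃ t ∈ T, ∃ κ : ProbabilityMeasure X,
      κ.toMeasure = (2:ℝ≥0∞)⁻¹ • a'.toMeasure + (2:ℝ≥0∞)⁻¹ • t.toMeasure ∧
      tvDist a.toMeasure κ.toMeasure ≤ ε) :
    ∀ K : ℕ, ∀ a ∈ A, ∃ t ∈ T, tvDist a.toMeasure t.toMeasure ≤ 2*ε + (1/2)^K := by
  intro K
  induction K with
  | zero =>
      intro a _
      obtain ⟨t, ht⟩ := hTne
      exact ⟨t, ht, le_trans tv_le_one (by norm_num; linarith)⟩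
  | succ K IH =>
      intro a ha
      obtain ⟨a', ha', t₁, ht₁, κ, hκ, h1⟩ := H a ha
      obtain ⟨t', ht', h2⟩ := IH a' ha'
      obtain ⟨t, ht, htm⟩ := hT t₁ ht₁ t' ht' (2:ℝ≥0∞)⁻¹ (2:ℝ≥0∞)⁻¹
        ENNReal.inv_two_add_inv_two
      refine ⟨t, ht, ?_⟩
      have h3 : tvDist κ.toMeasure t.toMeasure ≤ (1/2) * tvDist a'.toMeasure t'.toMeasure := by
        refine tv_mid hκ ?_
        rw [htm, add_comm]
      calc tvDist a.toMeasure t.toMeasure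
          ≤ tvDist a.toMeasure κ.toMeasure + tvDist κ.toMeasure t.toMeasure := tv_triangle
        _ ≤ ε + (1/2) * (2*ε + (1/2)^K) := by
            have := mul_le_mul_of_nonneg_left h2 (by norm_num : (0:ℝ) ≤ 1/2)
            linarith
        _ = 2*ε + (1/2)^(K+1) := by ring

end Iter

section GenLemmas
variable {X : Type*} [MeasurableSpace X] {P Q : Set (ProbabilityMeasure X)}

lemma midSet_mem {μ ν : ProbabilityMeasure X} (hμ : μ ∈ P) (hν : ν ∈ Q) :
    (⟨(2:ℝ≥0∞)⁻¹ • μ.toMeasure + (2:ℝ≥0∞)⁻¹ • ν.toMeasure,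
      isProbabilityMeasure_mid⟩ : ProbabilityMeasure X) ∈ midSet P Q :=
  ⟨μ, hμ, ν, hν, rfl⟩

lemma midSet_nonempty (hP : P.Nonempty) (hQ : Q.Nonempty) : (midSet P Q).Nonempty := by
  obtain ⟨μ, hμ⟩ := hP
  obtain ⟨ν, hν⟩ := hQ
  exact ⟨_, midSet_mem hμ hν⟩

lemma genKL_nonneg' (hP : P.Nonempty) : (0 : EReal) ≤ genKL P Q := by
  obtain ⟨μ₀, hμ₀⟩ := hP
  exact le_trans (le_iInf₂ fun ν _ => klDiv_nonneg) (le_iSup₂_of_le μ₀ hμ₀ le_rfl)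

/-- V components -/
noncomputable def V1 (P Q : Set (ProbabilityMeasure X)) : ℝ :=
  ⨆ μ : P, ⨅ ν : Q, tvDist μ.1.toMeasure ν.1.toMeasure

lemma genV_eq : genV P Q = max (V1 P Q) (V1 Q P) := by
  unfold genV V1
  congr 1
  congr 1
  funext ν
  congr 1
  funext μ
  rw [tv_comm]

lemma inf_tv_nonneg (hQ : Q.Nonempty) (μ : ProbabilityMeasure X) :
    0 ≤ ⨅ ν : Q, tvDist μ.toMeasure ν.1.toMeasure := by
  haveI : Nonempty Q := hQ.to_subtype
  exact le_ciInf fun ν => tv_nonneg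

lemma inf_tv_le_one (hQ : Q.Nonempty) (μ : ProbabilityMeasure X) :
    (⨅ ν : Q, tvDist μ.toMeasure ν.1.toMeasure) ≤ 1 := by
  obtain ⟨ν, hν⟩ := hQ
  exact le_trans (ciInf_le ⟨0, by rintro x ⟨ν', rfl⟩; exact tv_nonneg⟩ ⟨ν, hν⟩) tv_le_one

lemma V1_bddAbove (hQ : Q.Nonempty) : BddAbove (Set.range fun μ : P =>
    ⨅ ν : Q, tvDist μ.1.toMeasure ν.1.toMeasure) := by
  refine ⟨1, ?_⟩
  rintro x ⟨μ', rfl⟩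
  exact inf_tv_le_one hQ μ'.1

lemma V1_nonneg (hP : P.Nonempty) (hQ : Q.Nonempty) : 0 ≤ V1 P Q := by
  obtain ⟨μ, hμ⟩ := hP
  refine le_trans (inf_tv_nonneg hQ μ) ?_
  exact le_ciSup (f := fun μ : P => ⨅ ν : Q, tvDist μ.1.toMeasure ν.1.toMeasure)
    (V1_bddAbove hQ) (⟨μ, hμ⟩ : P)

lemma V1_le {c : ℝ} (hP : P.Nonempty) (hQ : Q.Nonempty)
    (h : ∀ μ ∈ P, ∃ ν ∈ Q, tvDist μ.toMeasure ν.toMeasure ≤ c) : V1 P Q ≤ c := by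
  haveI : Nonempty P := hP.to_subtype
  refine ciSup_le fun μ => ?_
  obtain ⟨ν, hν, hle⟩ := h μ.1 μ.2
  refine le_trans (ciInf_le (f := fun ν : Q => tvDist μ.1.toMeasure ν.1.toMeasure)
    ⟨0, by rintro x ⟨ν', rfl⟩; exact tv_nonneg⟩ (⟨ν, hν⟩ : Q)) hle

end GenLemmas

section EHelp

lemma EReal_le_coe_of_forall {x : EReal} {r : ℝ}
    (h : ∀ δ : ℝ, 0 < δ → x ≤ ((r + δ : ℝ) : EReal)) : x ≤ (r : EReal) := by
  by_contra hc
  push_neg at hc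
  obtain ⟨c, hc1, hc2⟩ := EReal.exists_between_coe_real hc
  have hδ : 0 < c - r := by
    have : r < c := by exact_mod_cast hc1
    linarith
  have h2 := h (c - r) hδ
  rw [show r + (c-r) = c by ring] at h2
  exact absurd (lt_of_le_of_lt h2 hc2) (lt_irrefl _)

lemma half_mul_le_of_le {x : EReal} {r : ℝ} (h0 : 0 ≤ x) (h : x ≤ (r : EReal)) :
    ((1/2 : ℝ) : EReal) * x ≤ ((r/2 : ℝ) : EReal) := by
  induction x using EReal.rec with
  | bot => exact absurd h0 (by simp)
  | coe a =>
      rw [← EReal.coe_mul]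
      have ha : a ≤ r := by exact_mod_cast h
      exact_mod_cast (by linarith : 1/2 * a ≤ r/2)
  | top => exact absurd h (by simp)

lemma extract_half {a b : EReal} {d : ℝ} (ha : 0 ≤ a) (hb : 0 ≤ b)
    (h : ((1/2:ℝ):EReal)*a + ((1/2:ℝ):EReal)*b ≤ (d:EReal)) :
    a ≤ ((2*d:ℝ):EReal) ∧ b ≤ ((2*d:ℝ):EReal) := by
  have hhalf : (0:EReal) < ((1/2:ℝ):EReal) := by exact_mod_cast (by norm_num : (0:ℝ) < 1/2)
  induction a using EReal.rec with
  | bot => exact absurd ha (by simp)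
  | top =>
      exfalso
      rw [EReal.coe_mul_top_of_pos (by norm_num)] at h
      have hbb : ((1/2:ℝ):EReal) * b ≠ ⊥ := by
        intro hcon
        have : (0:EReal) ≤ ((1/2:ℝ):EReal) * b := by
          induction b using EReal.rec with
          | bot => exact absurd hb (by simp)
          | coe c =>
              rw [← EReal.coe_mul]
              have hc : (0:ℝ) ≤ c := by exact_mod_cast hb
              exact_mod_cast (by linarith : (0:ℝ) ≤ 1/2 * c)
          | top => rw [EReal.coe_mul_top_of_pos (by norm_num)]; exact le_top
        rw [hcon] at this
        exact absurd this (by simp)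
      rw [EReal.top_add_of_ne_bot hbb] at h
      exact absurd h (by simp)
  | coe x =>
      induction b using EReal.rec with
      | bot => exact absurd hb (by simp)
      | top =>
          exfalso
          rw [EReal.coe_mul_top_of_pos (by norm_num)] at h
          have hne : ((1/2:ℝ):EReal) * (x:EReal) ≠ ⊥ := by
            rw [← EReal.coe_mul]; exact EReal.coe_ne_bot _
          rw [EReal.add_top_of_ne_bot hne] at h
          exact absurd h (by simp)
      | coe y =>
          rw [← EReal.coe_mul, ← EReal.coe_mul, ← EReal.coe_add] at h
          have hx : (0:ℝ) ≤ x := by exact_mod_cast ha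
          have hy : (0:ℝ) ≤ y := by exact_mod_cast hb
          have hs : 1/2 * x + 1/2 * y ≤ d := by exact_mod_cast h
          constructor
          · exact_mod_cast (by linarith : x ≤ 2*d)
          · exact_mod_cast (by linarith : y ≤ 2*d)

lemma le_of_le_add_pow {v c : ℝ} (h : ∀ K : ℕ, v ≤ c + (1/2)^K) : v ≤ c := by
  by_contra hc
  push_neg at hc
  obtain ⟨K, hK⟩ := exists_pow_lt_of_lt_one (by linarith : (0:ℝ) < v - c)
    (by norm_num : (1/2 : ℝ) < 1)
  linarith [h K]

end EHelp

section GenMain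
variable {X : Type*} [MeasurableSpace X] {P Q : Set (ProbabilityMeasure X)}

lemma genKL_P_le_V1 (hP : P.Nonempty) (hQ : Q.Nonempty) :
    genKL P (midSet P Q) ≤ ((V1 P Q : ℝ) : EReal) := by
  haveI : Nonempty Q := hQ.to_subtype
  refine iSup₂_le fun μ hμ => ?_
  set ri := ⨅ ν : Q, tvDist μ.toMeasure ν.1.toMeasure with hri
  have hkey : (⨅ κ ∈ midSet P Q, klDiv μ.toMeasure κ.toMeasure) ≤ ((ri : ℝ) : EReal) := by
    refine EReal_le_coe_of_forall fun δ hδ => ?_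
    obtain ⟨ν, hν⟩ := exists_lt_of_ciInf_lt
      (f := fun ν : Q => tvDist μ.toMeasure ν.1.toMeasure)
      (lt_add_of_pos_right ri hδ)
    refine le_trans (iInf₂_le _ (midSet_mem hμ ν.2)) ?_
    refine le_trans (@klDiv_mid_le_tv _ _ _ _ _ _ _ isProbabilityMeasure_mid rfl) ?_
    have hle : tvDist μ.toMeasure ν.1.toMeasure ≤ ri + δ := hν.le
    exact_mod_cast hle
  refine le_trans hkey ?_
  have : ri ≤ V1 P Q :=
    le_ciSup (f := fun μ : P => ⨅ ν : Q, tvDist μ.1.toMeasure ν.1.toMeasure)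
      (V1_bddAbove hQ) (⟨μ, hμ⟩ : P)
  exact_mod_cast this

lemma genKL_Q_le_V1 (hP : P.Nonempty) (hQ : Q.Nonempty) :
    genKL Q (midSet P Q) ≤ ((V1 Q P : ℝ) : EReal) := by
  haveI : Nonempty P := hP.to_subtype
  refine iSup₂_le fun ν hν => ?_
  set ri := ⨅ μ : P, tvDist ν.toMeasure μ.1.toMeasure with hri
  have hkey : (⨅ κ ∈ midSet P Q, klDiv ν.toMeasure κ.toMeasure) ≤ ((ri : ℝ) : EReal) := by
    refine EReal_le_coe_of_forall fun δ hδ => ?_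
    obtain ⟨μ, hμ⟩ := exists_lt_of_ciInf_lt
      (f := fun μ : P => tvDist ν.toMeasure μ.1.toMeasure)
      (lt_add_of_pos_right ri hδ)
    refine le_trans (iInf₂_le _ (midSet_mem μ.2 hν)) ?_
    refine le_trans (@klDiv_mid_le_tv _ _ _ μ.1.toMeasure _ _ _ isProbabilityMeasure_mid
      (by exact add_comm ((2:ℝ≥0∞)⁻¹ • μ.1.toMeasure) ((2:ℝ≥0∞)⁻¹ • ν.toMeasure))) ?_
    have hle : tvDist ν.toMeasure μ.1.toMeasure ≤ ri + δ := hμ.le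
    exact_mod_cast hle
  refine le_trans hkey ?_
  have : ri ≤ V1 Q P :=
    le_ciSup (f := fun ν : Q => ⨅ μ : P, tvDist ν.1.toMeasure μ.1.toMeasure)
      (V1_bddAbove hP) (⟨ν, hν⟩ : Q)
  exact_mod_cast this

lemma genJS_nonneg (hP : P.Nonempty) (hQ : Q.Nonempty) : (0:EReal) ≤ genJS P Q := by
  unfold genJS
  have h1 : (0:EReal) ≤ ((1/2:ℝ):EReal) * genKL P (midSet P Q) :=
    mul_nonneg (by exact_mod_cast (by norm_num : (0:ℝ) ≤ 1/2)) (genKL_nonneg' hP)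
  have h2 : (0:EReal) ≤ ((1/2:ℝ):EReal) * genKL Q (midSet P Q) :=
    mul_nonneg (by exact_mod_cast (by norm_num : (0:ℝ) ≤ 1/2)) (genKL_nonneg' hQ)
  exact add_nonneg h1 h2

lemma genJS_le_genV (hP : P.Nonempty) (hQ : Q.Nonempty) :
    genJS P Q ≤ ((genV P Q : ℝ) : EReal) := by
  unfold genJS
  have h1 := half_mul_le_of_le (genKL_nonneg' hP) (genKL_P_le_V1 hP hQ)
  have h2 := half_mul_le_of_le (genKL_nonneg' hQ) (genKL_Q_le_V1 hP hQ)
  refine le_trans (add_le_add h1 h2) ?_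
  rw [← EReal.coe_add]
  have hv : V1 P Q / 2 + V1 Q P / 2 ≤ genV P Q := by
    rw [genV_eq]
    rcases le_total (V1 P Q) (V1 Q P) with h | h
    · rw [max_eq_right h]; linarith
    · rw [max_eq_left h]; linarith
  exact_mod_cast hv

end GenMain

section Dir2
variable {X : Type*} [MeasurableSpace X] {P Q : Set (ProbabilityMeasure X)}

lemma genV_le_of_genJS_le (hPne : P.Nonempty) (hQne : Q.Nonempty)
    (hPconv : ConvexPM P) (hQconv : ConvexPM Q) {δ : ℝ} (hδ : 0 < δ)
    (h : genJS P Q ≤ ((δ : ℝ) : EReal)) :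
    genV P Q ≤ 2 * Real.sqrt (3*δ/2) := by
  obtain ⟨hA, hB⟩ := extract_half (genKL_nonneg' hPne) (genKL_nonneg' hQne) h
  set ε := Real.sqrt (3*δ/2) with hεdef
  have hε : 0 ≤ ε := Real.sqrt_nonneg _
  have key : ∀ a : ProbabilityMeasure X,
      (⨅ κ ∈ midSet P Q, klDiv a.toMeasure κ.toMeasure) ≤ ((2*δ:ℝ):EReal) →
      ∃ κ ∈ midSet P Q, tvDist a.toMeasure κ.toMeasure ≤ ε := by
    intro a h1
    have h2 : (⨅ κ ∈ midSet P Q, klDiv a.toMeasure κ.toMeasure) < ((3*δ:ℝ):EReal) :=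
      lt_of_le_of_lt h1 (by exact_mod_cast (by linarith : 2*δ < 3*δ))
    rw [iInf_lt_iff] at h2
    obtain ⟨κ, h2⟩ := h2
    rw [iInf_lt_iff] at h2
    obtain ⟨hκ, h2⟩ := h2
    refine ⟨κ, hκ, ?_⟩
    have := tv_le_of_klDiv_le (by linarith : (0:ℝ) ≤ 3*δ) h2.le
    exact this
  have HP : ∀ a ∈ P, ∃ a' ∈ P, ∃ t ∈ Q, ∃ κ : ProbabilityMeasure X,
      κ.toMeasure = (2:ℝ≥0∞)⁻¹ • a'.toMeasure + (2:ℝ≥0∞)⁻¹ • t.toMeasure ∧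
      tvDist a.toMeasure κ.toMeasure ≤ ε := by
    intro a ha
    obtain ⟨κ, hκ, htv⟩ := key a (le_trans (le_iSup₂
      (f := fun μ (_ : μ ∈ P) => ⨅ κ ∈ midSet P Q, klDiv μ.toMeasure κ.toMeasure) a ha) hA)
    obtain ⟨μ', hμ', ν', hν', hm⟩ := hκ
    exact ⟨μ', hμ', ν', hν', κ, hm, htv⟩
  have HQ : ∀ a ∈ Q, ∃ a' ∈ Q, ∃ t ∈ P, ∃ κ : ProbabilityMeasure X,
      κ.toMeasure = (2:ℝ≥0∞)⁻¹ • a'.toMeasure + (2:ℝ≥0∞)⁻¹ • t.toMeasure ∧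
      tvDist a.toMeasure κ.toMeasure ≤ ε := by
    intro a ha
    obtain ⟨κ, hκ, htv⟩ := key a (le_trans (le_iSup₂
      (f := fun ν (_ : ν ∈ Q) => ⨅ κ ∈ midSet P Q, klDiv ν.toMeasure κ.toMeasure) a ha) hB)
    obtain ⟨μ', hμ', ν', hν', hm⟩ := hκ
    exact ⟨ν', hν', μ', hμ', κ, by rw [hm, add_comm], htv⟩
  have hV1 : V1 P Q ≤ 2*ε := by
    refine le_of_le_add_pow fun K => ?_
    exact V1_le hPne hQne fun μ hμ => iter_tv P Q hQconv hQne hε HP K μ hμ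
  have hV2 : V1 Q P ≤ 2*ε := by
    refine le_of_le_add_pow fun K => ?_
    exact V1_le hQne hPne fun ν hν => iter_tv Q P hPconv hPne hε HQ K ν hν
  rw [genV_eq]
  exact max_le hV1 hV2

end Dir2

theorem js_tendsto_zero_iff_tv {X : Type*} [MeasurableSpace X] [TopologicalSpace X]
    [PolishSpace X] [BorelSpace X] (Pn : ℕ → Set (ProbabilityMeasure X)) (P : Set (ProbabilityMeasure X))
    (hne : ∀ n, (Pn n).Nonempty) (hc : ∀ n, IsCompact (Pn n)) (hconv : ∀ n, ConvexPM (Pn n))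
    (hPne : P.Nonempty) (hPc : IsCompact P) (hPconv : ConvexPM P) :
    Tendsto (fun n => genJS (Pn n) P) atTop (𝓝 (0 : EReal)) ↔
    Tendsto (fun n => genV (Pn n) P) atTop (𝓝 (0 : ℝ)) := by
  constructor
  · intro hJS
    rw [Metric.tendsto_atTop]
    intro ε hε
    set δ := ε^2/100 with hδdef
    have hδ : 0 < δ := by positivity
    have hev : ∀ᶠ n in atTop, genJS (Pn n) P < ((δ:ℝ):EReal) :=
      hJS.eventually (Iio_mem_nhds (by exact_mod_cast hδ))
    rw [eventually_atTop] at hev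
    obtain ⟨N, hN⟩ := hev
    refine ⟨N, fun n hn => ?_⟩
    have h1 := genV_le_of_genJS_le (hne n) hPne (hconv n) hPconv hδ (hN n hn).le
    have h0 : 0 ≤ genV (Pn n) P := by
      rw [genV_eq]
      exact le_trans (V1_nonneg (hne n) hPne) (le_max_left _ _)
    have hsq : Real.sqrt (3*δ/2) < ε/2 := by
      rw [show 3*δ/2 = 3*ε^2/200 by rw [hδdef]; ring]
      refine (Real.sqrt_lt' (by linarith)).2 ?_
      nlinarith
    rw [Real.dist_eq, sub_zero, abs_of_nonneg h0]
    linarith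
  · intro hV
    have hcoe : Tendsto (fun n => ((genV (Pn n) P : ℝ) : EReal)) atTop (𝓝 (0 : EReal)) := by
      have := (EReal.tendsto_coe (a := (0:ℝ))).2 hV
      simpa using this
    refine tendsto_of_tendsto_of_tendsto_of_le_of_le tendsto_const_nhds hcoe
      (fun n => genJS_nonneg (hne n) hPne) (fun n => genJS_le_genV (hne n) hPne)
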